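/- arXiv:1607.04727 — 6 statements merged into one kernel-verified Lean document; each statement's English description precedes it below -/
import Mathlib

section
/- Fix t > 0, k ≥ 0, and a nonnegative weight kernel F(t,·) : (0,t) → [0,∞). Define the weighted integral operator I[f] = ∫₀ᵗ τ^k F(t,τ) f(τ) dτ. If f and g are synchronous on [0,∞) and x, y : [0,∞) → [0,∞) are nonnegative, and all the integrals below exist, then I[x]·I[y·f·g] + I[y]·I[x·f·g] ≥ I[x·f]·I[y·g] + I[y·f]·I[x·g]. -/
open MeasureTheory

/-- Weighted integral operator `I[φ] = ∫₀ᵗ τ^k F(τ) φ(τ) dτ`. -/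
noncomputable def wInt (k t : ℝ) (F φ : ℝ → ℝ) : ℝ :=
  ∫ τ in (0:ℝ)..t, τ ^ k * F τ * φ τ

/-- Integrability of the weighted integrand. -/
def wIntble (k t : ℝ) (F φ : ℝ → ℝ) : Prop :=
  IntervalIntegrable (fun τ => τ ^ k * F τ * φ τ) volume 0 t

theorem weighted_chebyshev_lemma (k t : ℝ) (hk : 0 ≤ k) (ht : 0 < t)
    (F f g x y : ℝ → ℝ)
    (hF : ∀ τ ∈ Set.Ioo (0:ℝ) t, 0 ≤ F τ)
    (hsync : ∀ u v : ℝ, 0 ≤ u → 0 ≤ v → 0 ≤ (f u - f v) * (g u - g v))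
    (hx : ∀ u : ℝ, 0 ≤ u → 0 ≤ x u) (hy : ∀ u : ℝ, 0 ≤ u → 0 ≤ y u)
    (h1 : wIntble k t F x) (h2 : wIntble k t F y)
    (h3 : wIntble k t F (fun τ => y τ * f τ * g τ))
    (h4 : wIntble k t F (fun τ => x τ * f τ * g τ))
    (h5 : wIntble k t F (fun τ => x τ * f τ))
    (h6 : wIntble k t F (fun τ => y τ * g τ))
    (h7 : wIntble k t F (fun τ => y τ * f τ))
    (h8 : wIntble k t F (fun τ => x τ * g τ)) :
    wInt k t F x * wInt k t F (fun τ => y τ * f τ * g τ) +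
      wInt k t F y * wInt k t F (fun τ => x τ * f τ * g τ) ≥
    wInt k t F (fun τ => x τ * f τ) * wInt k t F (fun τ => y τ * g τ) +
      wInt k t F (fun τ => y τ * f τ) * wInt k t F (fun τ => x τ * g τ) := by
  simp only [wIntble] at h1 h2 h3 h4 h5 h6 h7 h8
  set I1 := wInt k t F x with hI1
  set I2 := wInt k t F y with hI2
  set I3 := wInt k t F (fun τ => y τ * f τ * g τ) with hI3
  set I4 := wInt k t F (fun τ => x τ * f τ * g τ) with hI4
  set I5 := wInt k t F (fun τ => x τ * f τ) with hI5
  set I6 := wInt k t F (fun τ => y τ * g τ) with hI6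
  set I7 := wInt k t F (fun τ => y τ * f τ) with hI7
  set I8 := wInt k t F (fun τ => x τ * g τ) with hI8
  -- the big integrand (outer variable τ)
  set G : ℝ → ℝ := fun τ =>
      (τ ^ k * F τ * (x τ * f τ * g τ)) * I2 + (τ ^ k * F τ * (y τ * f τ * g τ)) * I1
      + (τ ^ k * F τ * x τ) * I3 + (τ ^ k * F τ * y τ) * I4
      - ((τ ^ k * F τ * (x τ * f τ)) * I6 + (τ ^ k * F τ * (y τ * f τ)) * I8
        + (τ ^ k * F τ * (y τ * g τ)) * I5 + (τ ^ k * F τ * (x τ * g τ)) * I7) with hG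
  -- for each τ, `G τ` is an inner integral in ρ
  have inner : ∀ τ : ℝ, G τ = ∫ ρ in (0:ℝ)..t,
      ((τ ^ k * F τ * (x τ * f τ * g τ)) * (ρ ^ k * F ρ * y ρ)
      + (τ ^ k * F τ * (y τ * f τ * g τ)) * (ρ ^ k * F ρ * x ρ)
      + (τ ^ k * F τ * x τ) * (ρ ^ k * F ρ * (y ρ * f ρ * g ρ))
      + (τ ^ k * F τ * y τ) * (ρ ^ k * F ρ * (x ρ * f ρ * g ρ))
      - ((τ ^ k * F τ * (x τ * f τ)) * (ρ ^ k * F ρ * (y ρ * g ρ))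
        + (τ ^ k * F τ * (y τ * f τ)) * (ρ ^ k * F ρ * (x ρ * g ρ))
        + (τ ^ k * F τ * (y τ * g τ)) * (ρ ^ k * F ρ * (x ρ * f ρ))
        + (τ ^ k * F τ * (x τ * g τ)) * (ρ ^ k * F ρ * (y ρ * f ρ)))) := by
    intro τ
    rw [intervalIntegral.integral_sub
        (((((h2.const_mul _).add (h1.const_mul _)).add (h3.const_mul _)).add (h4.const_mul _)))
        ((((h6.const_mul _).add (h8.const_mul _)).add (h5.const_mul _)).add (h7.const_mul _)),
      intervalIntegral.integral_add (((h2.const_mul _).add (h1.const_mul _)).add (h3.const_mul _))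
        (h4.const_mul _),
      intervalIntegral.integral_add ((h2.const_mul _).add (h1.const_mul _)) (h3.const_mul _),
      intervalIntegral.integral_add (h2.const_mul _) (h1.const_mul _),
      intervalIntegral.integral_add (((h6.const_mul _).add (h8.const_mul _)).add (h5.const_mul _))
        (h7.const_mul _),
      intervalIntegral.integral_add ((h6.const_mul _).add (h8.const_mul _)) (h5.const_mul _),
      intervalIntegral.integral_add (h6.const_mul _) (h8.const_mul _),
      intervalIntegral.integral_const_mul, intervalIntegral.integral_const_mul,
      intervalIntegral.integral_const_mul, intervalIntegral.integral_const_mul,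
      intervalIntegral.integral_const_mul, intervalIntegral.integral_const_mul,
      intervalIntegral.integral_const_mul, intervalIntegral.integral_const_mul]
    simp only [hG, hI1, hI2, hI3, hI4, hI5, hI6, hI7, hI8, wInt]
  -- a.e. nonnegativity helpers
  have hne : ∀ c : ℝ, ∀ᵐ ρ : ℝ, ρ ≠ c := by
    intro c
    rw [Filter.eventually_iff, mem_ae_iff]
    simp [Set.compl_setOf]
  -- the inner integral is nonnegative for τ in the open interval
  have hGpos : ∀ τ ∈ Set.Ioo (0:ℝ) t, 0 ≤ G τ := by
    intro τ hτ
    rw [inner τ]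
    apply intervalIntegral.integral_nonneg_of_ae_restrict ht.le
    filter_upwards [ae_restrict_mem measurableSet_Icc, ae_restrict_of_ae (hne 0),
      ae_restrict_of_ae (hne t)] with ρ hρ hρ0 hρt
    have hρ' : ρ ∈ Set.Ioo (0:ℝ) t :=
      ⟨lt_of_le_of_ne hρ.1 (Ne.symm hρ0), lt_of_le_of_ne hρ.2 hρt⟩
    have key : (τ ^ k * F τ * (x τ * f τ * g τ)) * (ρ ^ k * F ρ * y ρ)
      + (τ ^ k * F τ * (y τ * f τ * g τ)) * (ρ ^ k * F ρ * x ρ)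
      + (τ ^ k * F τ * x τ) * (ρ ^ k * F ρ * (y ρ * f ρ * g ρ))
      + (τ ^ k * F τ * y τ) * (ρ ^ k * F ρ * (x ρ * f ρ * g ρ))
      - ((τ ^ k * F τ * (x τ * f τ)) * (ρ ^ k * F ρ * (y ρ * g ρ))
        + (τ ^ k * F τ * (y τ * f τ)) * (ρ ^ k * F ρ * (x ρ * g ρ))
        + (τ ^ k * F τ * (y τ * g τ)) * (ρ ^ k * F ρ * (x ρ * f ρ))
        + (τ ^ k * F τ * (x τ * g τ)) * (ρ ^ k * F ρ * (y ρ * f ρ)))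
      = ((τ ^ k * F τ) * (ρ ^ k * F ρ)) * ((x τ * y ρ + x ρ * y τ) *
          ((f τ - f ρ) * (g τ - g ρ))) := by ring
    rw [key]
    have hwτ : 0 ≤ τ ^ k * F τ :=
      mul_nonneg (Real.rpow_nonneg hτ.1.le k) (hF τ hτ)
    have hwρ : 0 ≤ ρ ^ k * F ρ :=
      mul_nonneg (Real.rpow_nonneg hρ'.1.le k) (hF ρ hρ')
    exact mul_nonneg (mul_nonneg hwτ hwρ) (mul_nonneg
      (add_nonneg (mul_nonneg (hx τ hτ.1.le) (hy ρ hρ'.1.le))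
        (mul_nonneg (hx ρ hρ'.1.le) (hy τ hτ.1.le)))
      (hsync τ ρ hτ.1.le hρ'.1.le))
  -- the outer integral of G is nonnegative
  have houter : 0 ≤ ∫ τ in (0:ℝ)..t, G τ := by
    apply intervalIntegral.integral_nonneg_of_ae_restrict ht.le
    filter_upwards [ae_restrict_mem measurableSet_Icc, ae_restrict_of_ae (hne 0),
      ae_restrict_of_ae (hne t)] with τ hτ hτ0 hτt
    exact hGpos τ ⟨lt_of_le_of_ne hτ.1 (Ne.symm hτ0), lt_of_le_of_ne hτ.2 hτt⟩
  -- evaluate the outer integral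
  have hval : (∫ τ in (0:ℝ)..t, G τ)
      = I4 * I2 + I3 * I1 + I1 * I3 + I2 * I4 - (I5 * I6 + I7 * I8 + I6 * I5 + I8 * I7) := by
    simp only [hG]
    rw [intervalIntegral.integral_sub
        ((((h4.mul_const _).add (h3.mul_const _)).add (h1.mul_const _)).add (h2.mul_const _))
        ((((h5.mul_const _).add (h7.mul_const _)).add (h6.mul_const _)).add (h8.mul_const _)),
      intervalIntegral.integral_add (((h4.mul_const _).add (h3.mul_const _)).add (h1.mul_const _))
        (h2.mul_const _),
      intervalIntegral.integral_add ((h4.mul_const _).add (h3.mul_const _)) (h1.mul_const _),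
      intervalIntegral.integral_add (h4.mul_const _) (h3.mul_const _),
      intervalIntegral.integral_add (((h5.mul_const _).add (h7.mul_const _)).add (h6.mul_const _))
        (h8.mul_const _),
      intervalIntegral.integral_add ((h5.mul_const _).add (h7.mul_const _)) (h6.mul_const _),
      intervalIntegral.integral_add (h5.mul_const _) (h7.mul_const _),
      intervalIntegral.integral_mul_const, intervalIntegral.integral_mul_const,
      intervalIntegral.integral_mul_const, intervalIntegral.integral_mul_const,
      intervalIntegral.integral_mul_const, intervalIntegral.integral_mul_const,
      intervalIntegral.integral_mul_const, intervalIntegral.integral_mul_const]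
    simp only [hI1, hI2, hI3, hI4, hI5, hI6, hI7, hI8, wInt]
  rw [hval] at houter
  nlinarith [houter]
end

section
/- Fix t > 0 and two nonnegative weight kernels F₁(t,·), F₂(t,·) on (0,t), defining weighted integral operators I₁[f] = ∫₀ᵗ τ^k F₁(t,τ) f(τ) dτ and I₂[f] = ∫₀ᵗ τ^k F₂(t,τ) f(τ) dτ. If f and g are synchronous on [0,∞) and x, y : [0,∞) → [0,∞) are nonnegative, and all integrals exist, then I₁[x]·I₂[y·f·g] + I₂[y]·I₁[x·f·g] ≥ I₁[x·f]·I₂[y·g] + I₂[y·f]·I₁[x·g]. -/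
open MeasureTheory

private lemma integral_nonneg_Ioo {t : ℝ} (ht : 0 < t) {h : ℝ → ℝ}
    (H : ∀ τ ∈ Set.Ioo (0:ℝ) t, 0 ≤ h τ) : 0 ≤ ∫ τ in (0:ℝ)..t, h τ := by
  rw [intervalIntegral.integral_of_le ht.le]
  apply MeasureTheory.integral_nonneg_of_ae
  have h1 : ∀ᵐ τ : ℝ ∂(volume.restrict (Set.Ioc 0 t)), τ ∈ Set.Ioc (0:ℝ) t :=
    ae_restrict_mem measurableSet_Ioc
  have h2 : ∀ᵐ τ : ℝ ∂(volume.restrict (Set.Ioc 0 t)), τ ≠ t := by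
    refine ae_restrict_of_ae ?_
    exact compl_mem_ae_iff.mpr (measure_singleton t)
  filter_upwards [h1, h2] with τ hτ hne
  exact H τ ⟨hτ.1, lt_of_le_of_ne hτ.2 hne⟩

theorem weighted_chebyshev_two_kernels (k t : ℝ) (hk : 0 ≤ k) (ht : 0 < t)
    (F₁ F₂ f g x y : ℝ → ℝ)
    (hF₁ : ∀ τ ∈ Set.Ioo (0:ℝ) t, 0 ≤ F₁ τ)
    (hF₂ : ∀ τ ∈ Set.Ioo (0:ℝ) t, 0 ≤ F₂ τ)
    (hsync : ∀ u v : ℝ, 0 ≤ u → 0 ≤ v → 0 ≤ (f u - f v) * (g u - g v))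
    (hx : ∀ u : ℝ, 0 ≤ u → 0 ≤ x u) (hy : ∀ u : ℝ, 0 ≤ u → 0 ≤ y u)
    (hint : ∀ φ ∈ [x, y, fun τ => y τ * f τ * g τ, fun τ => x τ * f τ * g τ,
        fun τ => x τ * f τ, fun τ => y τ * g τ, fun τ => y τ * f τ,
        fun τ => x τ * g τ], wIntble k t F₁ φ ∧ wIntble k t F₂ φ) :
    wInt k t F₁ x * wInt k t F₂ (fun τ => y τ * f τ * g τ) +
      wInt k t F₂ y * wInt k t F₁ (fun τ => x τ * f τ * g τ) ≥
    wInt k t F₁ (fun τ => x τ * f τ) * wInt k t F₂ (fun τ => y τ * g τ) +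
      wInt k t F₂ (fun τ => y τ * f τ) * wInt k t F₁ (fun τ => x τ * g τ) := by
  -- integrability facts
  have hx1 : wIntble k t F₁ x := (hint x (by simp)).1
  have hy2 : wIntble k t F₂ y := (hint y (by simp)).2
  have hyfg2 : wIntble k t F₂ (fun τ => y τ * f τ * g τ) := (hint _ (by simp)).2
  have hxfg1 : wIntble k t F₁ (fun τ => x τ * f τ * g τ) := (hint _ (by simp)).1
  have hxf1 : wIntble k t F₁ (fun τ => x τ * f τ) := (hint _ (by simp)).1
  have hyg2 : wIntble k t F₂ (fun τ => y τ * g τ) := (hint _ (by simp)).2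
  have hyf2 : wIntble k t F₂ (fun τ => y τ * f τ) := (hint _ (by simp)).2
  have hxg1 : wIntble k t F₁ (fun τ => x τ * g τ) := (hint _ (by simp)).1
  set c0 := wInt k t F₂ y with hc0
  set c1 := wInt k t F₂ (fun τ => y τ * f τ * g τ) with hc1
  set c2 := wInt k t F₂ (fun τ => y τ * g τ) with hc2
  set c3 := wInt k t F₂ (fun τ => y τ * f τ) with hc3
  -- the combined outer integrand
  set A : ℝ → ℝ := fun τ =>
    (τ ^ k * F₁ τ * (x τ * f τ * g τ)) * c0 + (τ ^ k * F₁ τ * x τ) * c1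
      - (τ ^ k * F₁ τ * (x τ * f τ)) * c2 - (τ ^ k * F₁ τ * (x τ * g τ)) * c3 with hA
  have hIA : ∫ τ in (0:ℝ)..t, A τ =
      wInt k t F₁ (fun τ => x τ * f τ * g τ) * c0 + wInt k t F₁ x * c1
        - wInt k t F₁ (fun τ => x τ * f τ) * c2
        - wInt k t F₁ (fun τ => x τ * g τ) * c3 := by
    rw [hA]
    rw [intervalIntegral.integral_sub (((hxfg1.mul_const c0).add (hx1.mul_const c1)).sub
        (hxf1.mul_const c2)) (hxg1.mul_const c3),
      intervalIntegral.integral_sub ((hxfg1.mul_const c0).add (hx1.mul_const c1))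
        (hxf1.mul_const c2),
      intervalIntegral.integral_add (hxfg1.mul_const c0) (hx1.mul_const c1),
      intervalIntegral.integral_mul_const, intervalIntegral.integral_mul_const,
      intervalIntegral.integral_mul_const, intervalIntegral.integral_mul_const]
    rfl
  have hApos : ∀ τ ∈ Set.Ioo (0:ℝ) t, 0 ≤ A τ := by
    intro τ hτ
    have ha : 0 ≤ τ ^ k * F₁ τ * x τ :=
      mul_nonneg (mul_nonneg (Real.rpow_nonneg hτ.1.le k) (hF₁ τ hτ)) (hx τ hτ.1.le)
    set a := τ ^ k * F₁ τ * x τ with hadef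
    have key : A τ = ∫ σ in (0:ℝ)..t,
        a * ((σ ^ k * F₂ σ * y σ) * ((f τ - f σ) * (g τ - g σ))) := by
      have hcong : ∀ σ : ℝ,
          a * ((σ ^ k * F₂ σ * y σ) * ((f τ - f σ) * (g τ - g σ))) =
          (a * (f τ * g τ)) * (σ ^ k * F₂ σ * y σ)
            + a * (σ ^ k * F₂ σ * (y σ * f σ * g σ))
            - (a * f τ) * (σ ^ k * F₂ σ * (y σ * g σ))
            - (a * g τ) * (σ ^ k * F₂ σ * (y σ * f σ)) := by
        intro σ; ring
      rw [intervalIntegral.integral_congr (fun σ _ => hcong σ)]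
      rw [intervalIntegral.integral_sub (((hy2.const_mul _).add (hyfg2.const_mul a)).sub
          (hyg2.const_mul _)) (hyf2.const_mul _),
        intervalIntegral.integral_sub ((hy2.const_mul _).add (hyfg2.const_mul a))
          (hyg2.const_mul _),
        intervalIntegral.integral_add (hy2.const_mul _) (hyfg2.const_mul a),
        intervalIntegral.integral_const_mul, intervalIntegral.integral_const_mul,
        intervalIntegral.integral_const_mul, intervalIntegral.integral_const_mul]
      rw [hA]
      simp only [hc0, hc1, hc2, hc3, wInt]
      ring
    rw [key]
    apply integral_nonneg_Ioo ht
    intro σ hσ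
    have : 0 ≤ σ ^ k * F₂ σ * y σ :=
      mul_nonneg (mul_nonneg (Real.rpow_nonneg hσ.1.le k) (hF₂ σ hσ)) (hy σ hσ.1.le)
    exact mul_nonneg ha (mul_nonneg this (hsync τ σ hτ.1.le hσ.1.le))
  have h0 : 0 ≤ ∫ τ in (0:ℝ)..t, A τ := integral_nonneg_Ioo ht hApos
  rw [hIA] at h0
  linarith
end

section
/- Fix t > 0 and a nonnegative kernel F(t,·) on (0,t) with weighted operator I[f] = ∫₀ᵗ τ^k F(t,τ) f(τ) dτ. Let f and g be synchronous on [0,∞) and r, p, q : [0,∞) → [0,∞) be nonnegative. Then (assuming all integrals exist): 2·I[r]·(I[p]·I[q·f·g] + I[q]·I[p·f·g]) + 2·I[p]·I[q]·I[r·f·g] ≥ I[r]·(I[p·f]·I[q·g] + I[q·f]·I[p·g]) + I[p]·(I[r·f]·I[q·g] + I[q·f]·I[r·g]) + I[q]·(I[r·f]·I[p·g] + I[p·f]·I[r·g]). -/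
open MeasureTheory

/-- Nonnegativity of a weighted integral of a nonnegative function. -/
lemma wInt_nonneg (k t : ℝ) (ht : 0 < t) (F φ : ℝ → ℝ)
    (hF : ∀ τ ∈ Set.Ioo (0:ℝ) t, 0 ≤ F τ)
    (hφ : ∀ u : ℝ, 0 ≤ u → 0 ≤ φ u) :
    0 ≤ wInt k t F φ := by
  apply intervalIntegral.integral_nonneg_of_ae_restrict ht.le
  rw [← Measure.restrict_congr_set Ioo_ae_eq_Icc]
  refine (ae_restrict_iff' measurableSet_Ioo).mpr (ae_of_all _ ?_)
  intro τ hτ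
  have h1 : (0:ℝ) ≤ τ ^ k := Real.rpow_nonneg hτ.1.le k
  exact mul_nonneg (mul_nonneg h1 (hF τ hτ)) (hφ τ hτ.1.le)

/-- Two-weight Chebyshev inequality. -/
lemma cheb2 (k t : ℝ) (ht : 0 < t) (F f g a b : ℝ → ℝ)
    (hF : ∀ τ ∈ Set.Ioo (0:ℝ) t, 0 ≤ F τ)
    (hsync : ∀ u v : ℝ, 0 ≤ u → 0 ≤ v → 0 ≤ (f u - f v) * (g u - g v))
    (ha : ∀ u : ℝ, 0 ≤ u → 0 ≤ a u) (hb : ∀ u : ℝ, 0 ≤ u → 0 ≤ b u)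
    (hIa : wIntble k t F a) (hIaf : wIntble k t F (fun τ => a τ * f τ))
    (hIag : wIntble k t F (fun τ => a τ * g τ))
    (hIafg : wIntble k t F (fun τ => a τ * f τ * g τ))
    (hIb : wIntble k t F b) (hIbf : wIntble k t F (fun τ => b τ * f τ))
    (hIbg : wIntble k t F (fun τ => b τ * g τ))
    (hIbfg : wIntble k t F (fun τ => b τ * f τ * g τ)) :
    wInt k t F (fun τ => a τ * f τ) * wInt k t F (fun τ => b τ * g τ) +
      wInt k t F (fun τ => b τ * f τ) * wInt k t F (fun τ => a τ * g τ) ≤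
    wInt k t F a * wInt k t F (fun τ => b τ * f τ * g τ) +
      wInt k t F b * wInt k t F (fun τ => a τ * f τ * g τ) := by
  set Ib := wInt k t F b with hIbdef
  set Ibf := wInt k t F (fun τ => b τ * f τ) with hIbfdef
  set Ibg := wInt k t F (fun τ => b τ * g τ) with hIbgdef
  set Ibfg := wInt k t F (fun τ => b τ * f τ * g τ) with hIbfgdef
  -- inner inequality
  have inner : ∀ u : ℝ, 0 ≤ u →
      0 ≤ f u * g u * Ib - f u * Ibg - g u * Ibf + Ibfg := by
    intro u hu
    have hEq : f u * g u * Ib - f u * Ibg - g u * Ibf + Ibfg =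
        ∫ σ in (0:ℝ)..t, (σ ^ k * F σ * b σ) * ((f u - f σ) * (g u - g σ)) := by
      have hfun : (fun σ => (σ ^ k * F σ * b σ) * ((f u - f σ) * (g u - g σ))) =
          fun σ => f u * g u * (σ ^ k * F σ * b σ) - f u * (σ ^ k * F σ * (b σ * g σ))
            - g u * (σ ^ k * F σ * (b σ * f σ)) + (σ ^ k * F σ * (b σ * f σ * g σ)) := by
        funext σ; ring
      rw [hfun]
      rw [intervalIntegral.integral_add
        (((hIb.const_mul _).sub (hIbg.const_mul _)).sub (hIbf.const_mul _)) hIbfg,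
        intervalIntegral.integral_sub ((hIb.const_mul _).sub (hIbg.const_mul _))
          (hIbf.const_mul _),
        intervalIntegral.integral_sub (hIb.const_mul _) (hIbg.const_mul _),
        intervalIntegral.integral_const_mul, intervalIntegral.integral_const_mul,
        intervalIntegral.integral_const_mul]
      rfl
    rw [hEq]
    apply intervalIntegral.integral_nonneg_of_ae_restrict ht.le
    rw [← Measure.restrict_congr_set Ioo_ae_eq_Icc]
    refine (ae_restrict_iff' measurableSet_Ioo).mpr (ae_of_all _ ?_)
    intro σ hσ
    have h1 : (0:ℝ) ≤ σ ^ k := Real.rpow_nonneg hσ.1.le k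
    exact mul_nonneg (mul_nonneg (mul_nonneg h1 (hF σ hσ)) (hb σ hσ.1.le))
      (hsync u σ hu hσ.1.le)
  -- outer identity
  have hEq2 : Ib * wInt k t F (fun τ => a τ * f τ * g τ)
      - Ibg * wInt k t F (fun τ => a τ * f τ)
      - Ibf * wInt k t F (fun τ => a τ * g τ)
      + Ibfg * wInt k t F a =
      ∫ τ in (0:ℝ)..t, (τ ^ k * F τ * a τ) *
        (f τ * g τ * Ib - f τ * Ibg - g τ * Ibf + Ibfg) := by
    have hfun : (fun τ => (τ ^ k * F τ * a τ) *
        (f τ * g τ * Ib - f τ * Ibg - g τ * Ibf + Ibfg)) =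
        fun τ => Ib * (τ ^ k * F τ * (a τ * f τ * g τ))
          - Ibg * (τ ^ k * F τ * (a τ * f τ))
          - Ibf * (τ ^ k * F τ * (a τ * g τ))
          + Ibfg * (τ ^ k * F τ * a τ) := by
      funext τ; ring
    rw [hfun]
    rw [intervalIntegral.integral_add
      (((hIafg.const_mul _).sub (hIaf.const_mul _)).sub (hIag.const_mul _)) (hIa.const_mul _),
      intervalIntegral.integral_sub ((hIafg.const_mul _).sub (hIaf.const_mul _))
        (hIag.const_mul _),
      intervalIntegral.integral_sub (hIafg.const_mul _) (hIaf.const_mul _),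
      intervalIntegral.integral_const_mul, intervalIntegral.integral_const_mul,
      intervalIntegral.integral_const_mul, intervalIntegral.integral_const_mul]
    rfl
  have hpos : 0 ≤ Ib * wInt k t F (fun τ => a τ * f τ * g τ)
      - Ibg * wInt k t F (fun τ => a τ * f τ)
      - Ibf * wInt k t F (fun τ => a τ * g τ)
      + Ibfg * wInt k t F a := by
    rw [hEq2]
    apply intervalIntegral.integral_nonneg_of_ae_restrict ht.le
    rw [← Measure.restrict_congr_set Ioo_ae_eq_Icc]
    refine (ae_restrict_iff' measurableSet_Ioo).mpr (ae_of_all _ ?_)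
    intro τ hτ
    have h1 : (0:ℝ) ≤ τ ^ k := Real.rpow_nonneg hτ.1.le k
    exact mul_nonneg (mul_nonneg (mul_nonneg h1 (hF τ hτ)) (ha τ hτ.1.le))
      (inner τ hτ.1.le)
  linarith

theorem weighted_chebyshev_three_weights (k t : ℝ) (hk : 0 ≤ k) (ht : 0 < t)
    (F f g r p q : ℝ → ℝ)
    (hF : ∀ τ ∈ Set.Ioo (0:ℝ) t, 0 ≤ F τ)
    (hsync : ∀ u v : ℝ, 0 ≤ u → 0 ≤ v → 0 ≤ (f u - f v) * (g u - g v))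
    (hr : ∀ u : ℝ, 0 ≤ u → 0 ≤ r u) (hp : ∀ u : ℝ, 0 ≤ u → 0 ≤ p u)
    (hq : ∀ u : ℝ, 0 ≤ u → 0 ≤ q u)
    (hint : ∀ φ ∈ [r, p, q, fun τ => q τ * f τ * g τ, fun τ => p τ * f τ * g τ,
        fun τ => r τ * f τ * g τ, fun τ => p τ * f τ, fun τ => q τ * g τ,
        fun τ => q τ * f τ, fun τ => p τ * g τ, fun τ => r τ * f τ,
        fun τ => r τ * g τ], wIntble k t F φ) :
    2 * wInt k t F r * (wInt k t F p * wInt k t F (fun τ => q τ * f τ * g τ) +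
        wInt k t F q * wInt k t F (fun τ => p τ * f τ * g τ)) +
      2 * wInt k t F p * wInt k t F q * wInt k t F (fun τ => r τ * f τ * g τ) ≥
    wInt k t F r * (wInt k t F (fun τ => p τ * f τ) * wInt k t F (fun τ => q τ * g τ) +
        wInt k t F (fun τ => q τ * f τ) * wInt k t F (fun τ => p τ * g τ)) +
      wInt k t F p * (wInt k t F (fun τ => r τ * f τ) * wInt k t F (fun τ => q τ * g τ) +
        wInt k t F (fun τ => q τ * f τ) * wInt k t F (fun τ => r τ * g τ)) +
      wInt k t F q * (wInt k t F (fun τ => r τ * f τ) * wInt k t F (fun τ => p τ * g τ) +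
        wInt k t F (fun τ => p τ * f τ) * wInt k t F (fun τ => r τ * g τ)) := by
  simp only [List.mem_cons, List.mem_singleton, forall_eq_or_imp, forall_eq] at hint
  obtain ⟨hIr, hIp, hIq, hIqfg, hIpfg, hIrfg, hIpf, hIqg, hIqf, hIpg, hIrf, hIrg, -⟩ := hint
  have hA : 0 ≤ wInt k t F r := wInt_nonneg k t ht F r hF hr
  have hB : 0 ≤ wInt k t F p := wInt_nonneg k t ht F p hF hp
  have hC : 0 ≤ wInt k t F q := wInt_nonneg k t ht F q hF hq
  have L1 := cheb2 k t ht F f g p q hF hsync hp hq hIp hIpf hIpg hIpfg hIq hIqf hIqg hIqfg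
  have L2 := cheb2 k t ht F f g r q hF hsync hr hq hIr hIrf hIrg hIrfg hIq hIqf hIqg hIqfg
  have L3 := cheb2 k t ht F f g r p hF hsync hr hp hIr hIrf hIrg hIrfg hIp hIpf hIpg hIpfg
  nlinarith [mul_le_mul_of_nonneg_left L1 hA, mul_le_mul_of_nonneg_left L2 hB,
    mul_le_mul_of_nonneg_left L3 hC]
end

section
/- Fix t > 0 and two nonnegative kernels defining weighted integral operators I₁ and I₂ on (0,t). Let f, g, h be positive continuous functions on [0,∞) satisfying (f(u)-f(v))(g(u)-g(v))(h(u)+h(v)) ≥ 0 for all u, v ∈ (0,t), and let x : [0,∞) → [0,∞) be nonnegative. Then: I₁[x]·I₂[x·f·g·h] + I₁[x·h]·I₂[x·f·g] + I₁[x·f·g]·I₂[x·h] + I₁[x·f·g·h]·I₂[x] ≥ I₁[x·f]·I₂[x·g·h] + I₁[x·g]·I₂[x·f·h] + I₁[x·g·h]·I₂[x·f] + I₁[x·f·h]·I₂[x·g]. -/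
open MeasureTheory

private lemma nonneg_int_Ioo {a b : ℝ} {φ : ℝ → ℝ} (hab : a ≤ b)
    (hφ : ∀ τ ∈ Set.Ioo a b, 0 ≤ φ τ) : 0 ≤ ∫ τ in a..b, φ τ := by
  apply intervalIntegral.integral_nonneg_of_ae_restrict hab
  rw [← MeasureTheory.Measure.restrict_congr_set MeasureTheory.Ioo_ae_eq_Icc]
  filter_upwards [MeasureTheory.ae_restrict_mem measurableSet_Ioo] with τ hτ using hφ τ hτ

theorem weighted_three_function_inequality (k t : ℝ) (hk : 0 ≤ k) (ht : 0 < t)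
    (F₁ F₂ f g h x : ℝ → ℝ)
    (hF₁ : ∀ τ ∈ Set.Ioo (0:ℝ) t, 0 ≤ F₁ τ)
    (hF₂ : ∀ τ ∈ Set.Ioo (0:ℝ) t, 0 ≤ F₂ τ)
    (hf : Continuous f) (hg : Continuous g) (hh : Continuous h)
    (hfpos : ∀ u : ℝ, 0 ≤ u → 0 < f u) (hgpos : ∀ u : ℝ, 0 ≤ u → 0 < g u)
    (hhpos : ∀ u : ℝ, 0 ≤ u → 0 < h u)
    (hcond : ∀ u ∈ Set.Ioo (0:ℝ) t, ∀ v ∈ Set.Ioo (0:ℝ) t,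
      0 ≤ (f u - f v) * (g u - g v) * (h u + h v))
    (hx : ∀ u : ℝ, 0 ≤ u → 0 ≤ x u)
    (hint : ∀ φ ∈ [x, fun τ => x τ * f τ * g τ * h τ, fun τ => x τ * h τ,
        fun τ => x τ * f τ * g τ, fun τ => x τ * f τ, fun τ => x τ * g τ * h τ,
        fun τ => x τ * g τ, fun τ => x τ * f τ * h τ],
      wIntble k t F₁ φ ∧ wIntble k t F₂ φ) :
    wInt k t F₁ x * wInt k t F₂ (fun τ => x τ * f τ * g τ * h τ) +
      wInt k t F₁ (fun τ => x τ * h τ) * wInt k t F₂ (fun τ => x τ * f τ * g τ) +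
      wInt k t F₁ (fun τ => x τ * f τ * g τ) * wInt k t F₂ (fun τ => x τ * h τ) +
      wInt k t F₁ (fun τ => x τ * f τ * g τ * h τ) * wInt k t F₂ x ≥
    wInt k t F₁ (fun τ => x τ * f τ) * wInt k t F₂ (fun τ => x τ * g τ * h τ) +
      wInt k t F₁ (fun τ => x τ * g τ) * wInt k t F₂ (fun τ => x τ * f τ * h τ) +
      wInt k t F₁ (fun τ => x τ * g τ * h τ) * wInt k t F₂ (fun τ => x τ * f τ) +
      wInt k t F₁ (fun τ => x τ * f τ * h τ) * wInt k t F₂ (fun τ => x τ * g τ) := by 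
  obtain ⟨a1, b1⟩ := hint x (by simp)
  obtain ⟨a2, b2⟩ := hint (fun τ => x τ * f τ * g τ * h τ) (by simp)
  obtain ⟨a3, b3⟩ := hint (fun τ => x τ * h τ) (by simp)
  obtain ⟨a4, b4⟩ := hint (fun τ => x τ * f τ * g τ) (by simp)
  obtain ⟨a5, b5⟩ := hint (fun τ => x τ * f τ) (by simp)
  obtain ⟨a6, b6⟩ := hint (fun τ => x τ * g τ * h τ) (by simp)
  obtain ⟨a7, b7⟩ := hint (fun τ => x τ * g τ) (by simp)
  obtain ⟨a8, b8⟩ := hint (fun τ => x τ * f τ * h τ) (by simp)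
  replace a1 : IntervalIntegrable (fun τ => τ ^ k * F₁ τ * x τ) volume 0 t := a1
  replace a2 : IntervalIntegrable (fun τ => τ ^ k * F₁ τ * (x τ * f τ * g τ * h τ)) volume 0 t := a2
  replace a3 : IntervalIntegrable (fun τ => τ ^ k * F₁ τ * (x τ * h τ)) volume 0 t := a3
  replace a4 : IntervalIntegrable (fun τ => τ ^ k * F₁ τ * (x τ * f τ * g τ)) volume 0 t := a4
  replace a5 : IntervalIntegrable (fun τ => τ ^ k * F₁ τ * (x τ * f τ)) volume 0 t := a5
  replace a6 : IntervalIntegrable (fun τ => τ ^ k * F₁ τ * (x τ * g τ * h τ)) volume 0 t := a6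
  replace a7 : IntervalIntegrable (fun τ => τ ^ k * F₁ τ * (x τ * g τ)) volume 0 t := a7
  replace a8 : IntervalIntegrable (fun τ => τ ^ k * F₁ τ * (x τ * f τ * h τ)) volume 0 t := a8
  replace b1 : IntervalIntegrable (fun τ => τ ^ k * F₂ τ * x τ) volume 0 t := b1
  replace b2 : IntervalIntegrable (fun τ => τ ^ k * F₂ τ * (x τ * f τ * g τ * h τ)) volume 0 t := b2
  replace b3 : IntervalIntegrable (fun τ => τ ^ k * F₂ τ * (x τ * h τ)) volume 0 t := b3
  replace b4 : IntervalIntegrable (fun τ => τ ^ k * F₂ τ * (x τ * f τ * g τ)) volume 0 t := b4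
  replace b5 : IntervalIntegrable (fun τ => τ ^ k * F₂ τ * (x τ * f τ)) volume 0 t := b5
  replace b6 : IntervalIntegrable (fun τ => τ ^ k * F₂ τ * (x τ * g τ * h τ)) volume 0 t := b6
  replace b7 : IntervalIntegrable (fun τ => τ ^ k * F₂ τ * (x τ * g τ)) volume 0 t := b7
  replace b8 : IntervalIntegrable (fun τ => τ ^ k * F₂ τ * (x τ * f τ * h τ)) volume 0 t := b8
  set I1x := wInt k t F₁ x with hI1x
  set I1fgh := wInt k t F₁ (fun τ => x τ * f τ * g τ * h τ) with hI1fgh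
  set I1h := wInt k t F₁ (fun τ => x τ * h τ) with hI1h
  set I1fg := wInt k t F₁ (fun τ => x τ * f τ * g τ) with hI1fg
  set I1f := wInt k t F₁ (fun τ => x τ * f τ) with hI1f
  set I1gh := wInt k t F₁ (fun τ => x τ * g τ * h τ) with hI1gh
  set I1g := wInt k t F₁ (fun τ => x τ * g τ) with hI1g
  set I1fh := wInt k t F₁ (fun τ => x τ * f τ * h τ) with hI1fh
  set I2x := wInt k t F₂ x with hI2x
  set I2fgh := wInt k t F₂ (fun τ => x τ * f τ * g τ * h τ) with hI2fgh
  set I2h := wInt k t F₂ (fun τ => x τ * h τ) with hI2h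
  set I2fg := wInt k t F₂ (fun τ => x τ * f τ * g τ) with hI2fg
  set I2f := wInt k t F₂ (fun τ => x τ * f τ) with hI2f
  set I2gh := wInt k t F₂ (fun τ => x τ * g τ * h τ) with hI2gh
  set I2g := wInt k t F₂ (fun τ => x τ * g τ) with hI2g
  set I2fh := wInt k t F₂ (fun τ => x τ * f τ * h τ) with hI2fh
  set D : ℝ → ℝ := fun v =>
    (I1fgh + h v * I1fg + (f v * g v * h v) * I1x + (f v * g v) * I1h) -
      ((g v * h v) * I1f + (f v * h v) * I1g + f v * I1gh + g v * I1fh) with hD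
  have hDeq : ∀ v : ℝ, D v =
      ∫ u in (0:ℝ)..t, u ^ k * F₁ u * (x u * ((f u - f v) * (g u - g v) * (h u + h v))) := by
    intro v
    have e : (fun u => u ^ k * F₁ u * (x u * ((f u - f v) * (g u - g v) * (h u + h v)))) =
        fun u => (u ^ k * F₁ u * (x u * f u * g u * h u)
            + h v * (u ^ k * F₁ u * (x u * f u * g u))
            + (f v * g v * h v) * (u ^ k * F₁ u * x u)
            + (f v * g v) * (u ^ k * F₁ u * (x u * h u)))
          - ((g v * h v) * (u ^ k * F₁ u * (x u * f u))
            + (f v * h v) * (u ^ k * F₁ u * (x u * g u))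
            + f v * (u ^ k * F₁ u * (x u * g u * h u))
            + g v * (u ^ k * F₁ u * (x u * f u * h u))) := by
      funext u; ring
    have c2 := a2
    have c4 := a4.const_mul (h v)
    have c1 := a1.const_mul (f v * g v * h v)
    have c3 := a3.const_mul (f v * g v)
    have d5 := a5.const_mul (g v * h v)
    have d7 := a7.const_mul (f v * h v)
    have d6 := a6.const_mul (f v)
    have d8 := a8.const_mul (g v)
    rw [e, intervalIntegral.integral_sub (((c2.add c4).add c1).add c3) (((d5.add d7).add d6).add d8),
        intervalIntegral.integral_add ((c2.add c4).add c1) c3,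
        intervalIntegral.integral_add (c2.add c4) c1,
        intervalIntegral.integral_add c2 c4,
        intervalIntegral.integral_add ((d5.add d7).add d6) d8,
        intervalIntegral.integral_add (d5.add d7) d6,
        intervalIntegral.integral_add d5 d7]
    simp only [intervalIntegral.integral_const_mul]
    simp only [hD, hI1fgh, hI1fg, hI1x, hI1h, hI1f, hI1g, hI1gh, hI1fh, wInt]
  have hDnn : ∀ v ∈ Set.Ioo (0:ℝ) t, 0 ≤ D v := by
    intro v hv
    rw [hDeq v]
    refine nonneg_int_Ioo ht.le fun u hu => ?_
    exact mul_nonneg (mul_nonneg (Real.rpow_nonneg hu.1.le k) (hF₁ u hu))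
      (mul_nonneg (hx u hu.1.le) (hcond u hu v hv))
  have hkey : 0 ≤ I1fgh * I2x + I1fg * I2h + I1x * I2fgh + I1h * I2fg -
      (I1f * I2gh + I1g * I2fh + I1gh * I2f + I1fh * I2g) := by
    have e2 : (fun v => v ^ k * F₂ v * (x v * D v)) = fun v =>
        (I1fgh * (v ^ k * F₂ v * x v)
          + I1fg * (v ^ k * F₂ v * (x v * h v))
          + I1x * (v ^ k * F₂ v * (x v * f v * g v * h v))
          + I1h * (v ^ k * F₂ v * (x v * f v * g v)))
        - (I1f * (v ^ k * F₂ v * (x v * g v * h v))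
          + I1g * (v ^ k * F₂ v * (x v * f v * h v))
          + I1gh * (v ^ k * F₂ v * (x v * f v))
          + I1fh * (v ^ k * F₂ v * (x v * g v))) := by
      funext v; simp only [hD]; ring
    have hnn : 0 ≤ ∫ v in (0:ℝ)..t, v ^ k * F₂ v * (x v * D v) :=
      nonneg_int_Ioo ht.le fun v hv =>
        mul_nonneg (mul_nonneg (Real.rpow_nonneg hv.1.le k) (hF₂ v hv))
          (mul_nonneg (hx v hv.1.le) (hDnn v hv))
    have c1 := b1.const_mul I1fgh
    have c3 := b3.const_mul I1fg
    have c2 := b2.const_mul I1x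
    have c4 := b4.const_mul I1h
    have d6 := b6.const_mul I1f
    have d8 := b8.const_mul I1g
    have d5 := b5.const_mul I1gh
    have d7 := b7.const_mul I1fh
    rw [e2, intervalIntegral.integral_sub (((c1.add c3).add c2).add c4) (((d6.add d8).add d5).add d7),
        intervalIntegral.integral_add ((c1.add c3).add c2) c4,
        intervalIntegral.integral_add (c1.add c3) c2,
        intervalIntegral.integral_add c1 c3,
        intervalIntegral.integral_add ((d6.add d8).add d5) d7,
        intervalIntegral.integral_add (d6.add d8) d5,
        intervalIntegral.integral_add d6 d8] at hnn
    simp only [intervalIntegral.integral_const_mul] at hnn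
    simp only [hI2x, hI2h, hI2fgh, hI2fg, hI2gh, hI2fh, hI2f, hI2g, wInt] at hnn ⊢
    linarith [hnn]
  linarith [hkey]
end

section
/- Fix t > 0 and two nonnegative kernels defining weighted integral operators I₁ and I₂ on (0,t). Let f, g, h be positive continuous functions on [0,∞) satisfying (f(u)-f(v))(g(u)-g(v))(h(u)+h(v)) ≥ 0 for all u, v ∈ (0,t), and let x, y : [0,∞) → [0,∞) be nonnegative. Then: I₁[x]·I₂[y·f·g·h] + I₁[x·h]·I₂[y·f·g] + I₁[x·f·g]·I₂[y·h] + I₁[x·f·g·h]·I₂[y] ≥ I₁[x·f]·I₂[y·g·h] + I₁[x·g]·I₂[y·f·h] + I₁[x·g·h]·I₂[y·f] + I₁[x·f·h]·I₂[y·g]. -/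
open MeasureTheory

/-- Linearity of the weighted integral over a `Fin 8` combination. -/
lemma wInt_sum (k t : ℝ) (F : ℝ → ℝ) (c : Fin 8 → ℝ) (ψ : Fin 8 → ℝ → ℝ)
    (hi : ∀ i, wIntble k t F (ψ i)) :
    (∫ v in (0:ℝ)..t, ∑ i, c i * (v ^ k * F v * ψ i v)) = ∑ i, c i * wInt k t F (ψ i) := by
  rw [intervalIntegral.integral_finset_sum (fun i _ => (hi i).const_mul (c i))]
  exact Finset.sum_congr rfl fun i _ => by
    rw [intervalIntegral.integral_const_mul]; rfl

theorem weighted_three_function_inequality_two_weights (k t : ℝ) (hk : 0 ≤ k) (ht : 0 < t)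
    (F₁ F₂ f g h x y : ℝ → ℝ)
    (hF₁ : ∀ τ ∈ Set.Ioo (0:ℝ) t, 0 ≤ F₁ τ)
    (hF₂ : ∀ τ ∈ Set.Ioo (0:ℝ) t, 0 ≤ F₂ τ)
    (hf : Continuous f) (hg : Continuous g) (hh : Continuous h)
    (hfpos : ∀ u : ℝ, 0 ≤ u → 0 < f u) (hgpos : ∀ u : ℝ, 0 ≤ u → 0 < g u)
    (hhpos : ∀ u : ℝ, 0 ≤ u → 0 < h u)
    (hcond : ∀ u ∈ Set.Ioo (0:ℝ) t, ∀ v ∈ Set.Ioo (0:ℝ) t,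
      0 ≤ (f u - f v) * (g u - g v) * (h u + h v))
    (hx : ∀ u : ℝ, 0 ≤ u → 0 ≤ x u) (hy : ∀ u : ℝ, 0 ≤ u → 0 ≤ y u)
    (hint₁ : ∀ φ ∈ [x, fun τ => x τ * f τ * g τ * h τ, fun τ => x τ * h τ,
        fun τ => x τ * f τ * g τ, fun τ => x τ * f τ, fun τ => x τ * g τ * h τ,
        fun τ => x τ * g τ, fun τ => x τ * f τ * h τ], wIntble k t F₁ φ)
    (hint₂ : ∀ φ ∈ [y, fun τ => y τ * f τ * g τ * h τ, fun τ => y τ * h τ,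
        fun τ => y τ * f τ * g τ, fun τ => y τ * f τ, fun τ => y τ * g τ * h τ,
        fun τ => y τ * g τ, fun τ => y τ * f τ * h τ], wIntble k t F₂ φ) :
    wInt k t F₁ x * wInt k t F₂ (fun τ => y τ * f τ * g τ * h τ) +
      wInt k t F₁ (fun τ => x τ * h τ) * wInt k t F₂ (fun τ => y τ * f τ * g τ) +
      wInt k t F₁ (fun τ => x τ * f τ * g τ) * wInt k t F₂ (fun τ => y τ * h τ) +
      wInt k t F₁ (fun τ => x τ * f τ * g τ * h τ) * wInt k t F₂ y ≥
    wInt k t F₁ (fun τ => x τ * f τ) * wInt k t F₂ (fun τ => y τ * g τ * h τ) +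
      wInt k t F₁ (fun τ => x τ * g τ) * wInt k t F₂ (fun τ => y τ * f τ * h τ) +
      wInt k t F₁ (fun τ => x τ * g τ * h τ) * wInt k t F₂ (fun τ => y τ * f τ) +
      wInt k t F₁ (fun τ => x τ * f τ * h τ) * wInt k t F₂ (fun τ => y τ * g τ) := by
  set Ψ : Fin 8 → ℝ → ℝ := ![x, fun τ => x τ * f τ * g τ * h τ, fun τ => x τ * h τ,
      fun τ => x τ * f τ * g τ, fun τ => x τ * f τ, fun τ => x τ * g τ * h τ,
      fun τ => x τ * g τ, fun τ => x τ * f τ * h τ] with hΨ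
  set Φ : Fin 8 → ℝ → ℝ := ![y, fun τ => y τ * f τ * g τ * h τ, fun τ => y τ * h τ,
      fun τ => y τ * f τ * g τ, fun τ => y τ * f τ, fun τ => y τ * g τ * h τ,
      fun τ => y τ * g τ, fun τ => y τ * f τ * h τ] with hΦ
  have hA : ∀ i, wIntble k t F₁ (Ψ i) := by
    intro i; fin_cases i
    exacts [hint₁ x (by simp), hint₁ (fun τ => x τ * f τ * g τ * h τ) (by simp),
      hint₁ (fun τ => x τ * h τ) (by simp), hint₁ (fun τ => x τ * f τ * g τ) (by simp),
      hint₁ (fun τ => x τ * f τ) (by simp), hint₁ (fun τ => x τ * g τ * h τ) (by simp),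
      hint₁ (fun τ => x τ * g τ) (by simp), hint₁ (fun τ => x τ * f τ * h τ) (by simp)]
  have hB : ∀ i, wIntble k t F₂ (Φ i) := by
    intro i; fin_cases i
    exacts [hint₂ y (by simp), hint₂ (fun τ => y τ * f τ * g τ * h τ) (by simp),
      hint₂ (fun τ => y τ * h τ) (by simp), hint₂ (fun τ => y τ * f τ * g τ) (by simp),
      hint₂ (fun τ => y τ * f τ) (by simp), hint₂ (fun τ => y τ * g τ * h τ) (by simp),
      hint₂ (fun τ => y τ * g τ) (by simp), hint₂ (fun τ => y τ * f τ * h τ) (by simp)]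
  -- Step A : the inner combination is nonnegative for each u ∈ (0,t)
  have hQ : ∀ u ∈ Set.Ioo (0:ℝ) t, 0 ≤ ∑ i,
      (![f u * g u * h u, 1, f u * g u, h u, -(g u * h u), -(f u), -(f u * h u), -(g u)] :
        Fin 8 → ℝ) i * wInt k t F₂ (Φ i) := by
    intro u hu
    rw [← wInt_sum k t F₂ _ _ hB]
    rw [intervalIntegral.integral_of_le ht.le, MeasureTheory.integral_Ioc_eq_integral_Ioo]
    refine setIntegral_nonneg measurableSet_Ioo fun v hv => ?_
    have hco : (∑ i, (![f u * g u * h u, 1, f u * g u, h u, -(g u * h u), -(f u),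
        -(f u * h u), -(g u)] : Fin 8 → ℝ) i * (v ^ k * F₂ v * Φ i v)) =
        v ^ k * F₂ v * (y v * ((f u - f v) * (g u - g v) * (h u + h v))) := by
      simp [hΦ, Fin.sum_univ_succ, Matrix.cons_val_zero, Matrix.cons_val_succ]
      ring
    rw [hco]
    exact mul_nonneg (mul_nonneg (Real.rpow_nonneg hv.1.le k) (hF₂ v hv))
      (mul_nonneg (hy v hv.1.le) (hcond u hu v hv))
  -- Step B : the outer integral
  have key := wInt_sum k t F₁
    (![wInt k t F₂ (fun τ => y τ * f τ * g τ * h τ), wInt k t F₂ y,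
       wInt k t F₂ (fun τ => y τ * f τ * g τ), wInt k t F₂ (fun τ => y τ * h τ),
       -(wInt k t F₂ (fun τ => y τ * g τ * h τ)), -(wInt k t F₂ (fun τ => y τ * f τ)),
       -(wInt k t F₂ (fun τ => y τ * f τ * h τ)), -(wInt k t F₂ (fun τ => y τ * g τ))]) Ψ hA
  have hnn : (0:ℝ) ≤ ∫ u in (0:ℝ)..t, ∑ i,
      (![wInt k t F₂ (fun τ => y τ * f τ * g τ * h τ), wInt k t F₂ y,
       wInt k t F₂ (fun τ => y τ * f τ * g τ), wInt k t F₂ (fun τ => y τ * h τ),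
       -(wInt k t F₂ (fun τ => y τ * g τ * h τ)), -(wInt k t F₂ (fun τ => y τ * f τ)),
       -(wInt k t F₂ (fun τ => y τ * f τ * h τ)), -(wInt k t F₂ (fun τ => y τ * g τ))] :
        Fin 8 → ℝ) i * (u ^ k * F₁ u * Ψ i u) := by
    rw [intervalIntegral.integral_of_le ht.le, MeasureTheory.integral_Ioc_eq_integral_Ioo]
    refine setIntegral_nonneg measurableSet_Ioo fun u hu => ?_
    have h1 := hQ u hu
    have h2 : (∑ i, (![wInt k t F₂ (fun τ => y τ * f τ * g τ * h τ), wInt k t F₂ y,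
       wInt k t F₂ (fun τ => y τ * f τ * g τ), wInt k t F₂ (fun τ => y τ * h τ),
       -(wInt k t F₂ (fun τ => y τ * g τ * h τ)), -(wInt k t F₂ (fun τ => y τ * f τ)),
       -(wInt k t F₂ (fun τ => y τ * f τ * h τ)), -(wInt k t F₂ (fun τ => y τ * g τ))] :
        Fin 8 → ℝ) i * (u ^ k * F₁ u * Ψ i u)) =
        (u ^ k * F₁ u * x u) * (∑ i,
      (![f u * g u * h u, 1, f u * g u, h u, -(g u * h u), -(f u), -(f u * h u), -(g u)] :
        Fin 8 → ℝ) i * wInt k t F₂ (Φ i)) := by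
      simp [hΨ, hΦ, Fin.sum_univ_succ, Matrix.cons_val_zero, Matrix.cons_val_succ]
      ring
    rw [h2]
    exact mul_nonneg (mul_nonneg (mul_nonneg (Real.rpow_nonneg hu.1.le k) (hF₁ u hu))
      (hx u hu.1.le)) h1
  rw [key] at hnn
  simp only [hΨ, Fin.sum_univ_succ, Fin.sum_univ_zero, Matrix.cons_val_zero,
    Matrix.cons_val_succ, add_zero] at hnn
  ring_nf at hnn ⊢
  linarith
end

section
/- Fix t > 0 and a nonnegative kernel F(t,·) on (0,t) with weighted operator I[f] = ∫₀ᵗ τ^k F(t,τ) f(τ) dτ. If f and g are asynchronous on [0,∞) (i.e. (f(u)-f(v))(g(u)-g(v)) ≤ 0 for all u,v ≥ 0) and x, y : [0,∞) → [0,∞) are nonnegative, then the reversed inequality holds: I[x]·I[y·f·g] + I[y]·I[x·f·g] ≤ I[x·f]·I[y·g] + I[y·f]·I[x·g]. -/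
open MeasureTheory

/-- Nonpositivity of an interval integral from a.e.-interior pointwise nonpositivity. -/
lemma wInt_aux_nonpos {t : ℝ} (ht : 0 < t) {h : ℝ → ℝ}
    (hle : ∀ v ∈ Set.Ioo (0:ℝ) t, h v ≤ 0) :
    (∫ v in (0:ℝ)..t, h v) ≤ 0 := by
  have h0 : (0:ℝ) ≤ ∫ v in (0:ℝ)..t, -h v := by
    apply intervalIntegral.integral_nonneg_of_ae_restrict ht.le
    rw [← MeasureTheory.Measure.restrict_congr_set MeasureTheory.Ioo_ae_eq_Icc]
    refine (MeasureTheory.ae_restrict_iff' measurableSet_Ioo).mpr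
      (Filter.Eventually.of_forall ?_)
    intro v hv
    simpa using hle v hv
  rw [intervalIntegral.integral_neg] at h0
  linarith

theorem weighted_chebyshev_asynchronous (k t : ℝ) (hk : 0 ≤ k) (ht : 0 < t)
    (F f g x y : ℝ → ℝ)
    (hF : ∀ τ ∈ Set.Ioo (0:ℝ) t, 0 ≤ F τ)
    (hasync : ∀ u v : ℝ, 0 ≤ u → 0 ≤ v → (f u - f v) * (g u - g v) ≤ 0)
    (hx : ∀ u : ℝ, 0 ≤ u → 0 ≤ x u) (hy : ∀ u : ℝ, 0 ≤ u → 0 ≤ y u)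
    (hint : ∀ φ ∈ [x, y, fun τ => y τ * f τ * g τ, fun τ => x τ * f τ * g τ,
        fun τ => x τ * f τ, fun τ => y τ * g τ, fun τ => y τ * f τ,
        fun τ => x τ * g τ], wIntble k t F φ) :
    wInt k t F x * wInt k t F (fun τ => y τ * f τ * g τ) +
      wInt k t F y * wInt k t F (fun τ => x τ * f τ * g τ) ≤
    wInt k t F (fun τ => x τ * f τ) * wInt k t F (fun τ => y τ * g τ) +
      wInt k t F (fun τ => y τ * f τ) * wInt k t F (fun τ => x τ * g τ) := by
  simp only [List.mem_cons, List.not_mem_nil, or_false, forall_eq_or_imp, forall_eq] at hint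
  obtain ⟨hix, hiy, hiyfg, hixfg, hixf, hiyg, hiyf, hixg⟩ := hint
  unfold wIntble at hix hiy hiyfg hixfg hixf hiyg hiyf hixg
  set Iy := wInt k t F y with hIy
  set Iyg := wInt k t F (fun τ => y τ * g τ) with hIyg
  set Iyf := wInt k t F (fun τ => y τ * f τ) with hIyf
  set Iyfg := wInt k t F (fun τ => y τ * f τ * g τ) with hIyfg
  -- pointwise bound for fixed u
  have key : ∀ u ∈ Set.Ioo (0:ℝ) t,
      u ^ k * F u * (x u * f u * g u) * Iy - u ^ k * F u * (x u * f u) * Iyg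
        - u ^ k * F u * (x u * g u) * Iyf + u ^ k * F u * x u * Iyfg ≤ 0 := by
    intro u hu
    set a : ℝ := u ^ k * F u * x u with ha
    have ha0 : 0 ≤ a := by
      have := Real.rpow_nonneg hu.1.le k
      exact mul_nonneg (mul_nonneg this (hF u hu)) (hx u hu.1.le)
    have hrw : u ^ k * F u * (x u * f u * g u) * Iy - u ^ k * F u * (x u * f u) * Iyg
        - u ^ k * F u * (x u * g u) * Iyf + u ^ k * F u * x u * Iyfg
        = ∫ v in (0:ℝ)..t,
            a * (v ^ k * F v * y v) * ((f u - f v) * (g u - g v)) := by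
      have hfun : ∀ v : ℝ, a * (v ^ k * F v * y v) * ((f u - f v) * (g u - g v))
          = (a * f u * g u) * (v ^ k * F v * y v)
            - (a * f u) * (v ^ k * F v * (y v * g v))
            - (a * g u) * (v ^ k * F v * (y v * f v))
            + a * (v ^ k * F v * (y v * f v * g v)) := by
        intro v; ring
      rw [intervalIntegral.integral_congr (fun v _ => hfun v)]
      rw [intervalIntegral.integral_add (((hiy.const_mul _).sub (hiyg.const_mul _)).sub
          (hiyf.const_mul _)) (hiyfg.const_mul _),
        intervalIntegral.integral_sub ((hiy.const_mul _).sub (hiyg.const_mul _))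
          (hiyf.const_mul _),
        intervalIntegral.integral_sub (hiy.const_mul _) (hiyg.const_mul _),
        intervalIntegral.integral_const_mul, intervalIntegral.integral_const_mul,
        intervalIntegral.integral_const_mul, intervalIntegral.integral_const_mul]
      simp only [hIy, hIyg, hIyf, hIyfg, wInt, ha]
      ring
    rw [hrw]
    apply wInt_aux_nonpos ht
    intro v hv
    have hb : 0 ≤ v ^ k * F v * y v := by
      have := Real.rpow_nonneg hv.1.le k
      exact mul_nonneg (mul_nonneg this (hF v hv)) (hy v hv.1.le)
    exact mul_nonpos_of_nonneg_of_nonpos (mul_nonneg ha0 hb)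
      (hasync u v hu.1.le hv.1.le)
  -- integrate the pointwise bound
  have hGint : IntervalIntegrable (fun u =>
      u ^ k * F u * (x u * f u * g u) * Iy - u ^ k * F u * (x u * f u) * Iyg
        - u ^ k * F u * (x u * g u) * Iyf + u ^ k * F u * x u * Iyfg) volume 0 t :=
    (((hixfg.mul_const _).sub (hixf.mul_const _)).sub (hixg.mul_const _)).add
      (hix.mul_const _)
  have hsum : (∫ u in (0:ℝ)..t,
      (u ^ k * F u * (x u * f u * g u) * Iy - u ^ k * F u * (x u * f u) * Iyg
        - u ^ k * F u * (x u * g u) * Iyf + u ^ k * F u * x u * Iyfg))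
      = wInt k t F (fun τ => x τ * f τ * g τ) * Iy
        - wInt k t F (fun τ => x τ * f τ) * Iyg
        - wInt k t F (fun τ => x τ * g τ) * Iyf
        + wInt k t F x * Iyfg := by
    rw [intervalIntegral.integral_add (((hixfg.mul_const _).sub (hixf.mul_const _)).sub
        (hixg.mul_const _)) (hix.mul_const _),
      intervalIntegral.integral_sub ((hixfg.mul_const _).sub (hixf.mul_const _))
        (hixg.mul_const _),
      intervalIntegral.integral_sub (hixfg.mul_const _) (hixf.mul_const _),
      intervalIntegral.integral_mul_const, intervalIntegral.integral_mul_const,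
      intervalIntegral.integral_mul_const, intervalIntegral.integral_mul_const]
    simp only [wInt]
  have hfinal : wInt k t F (fun τ => x τ * f τ * g τ) * Iy
      - wInt k t F (fun τ => x τ * f τ) * Iyg
      - wInt k t F (fun τ => x τ * g τ) * Iyf
      + wInt k t F x * Iyfg ≤ 0 := by
    rw [← hsum]
    exact wInt_aux_nonpos ht key
  nlinarith [hfinal]
end
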